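/- For integers Δ ≥ 1 and 1 ≤ d ≤ Δ, and every real λ ≥ 0, one has (Δ+1)(1 + dλ)^{Δ/d} ≥ 1 + Δ(1 + (d+1)λ)^{(Δ+1)/(d+1)}. -/

import Mathlib

open Real Set

theorem stmt_2 (Δ d : ℕ) (hΔ : 1 ≤ Δ) (hd1 : 1 ≤ d) (hdΔ : d ≤ Δ)
    (lam : ℝ) (hlam : 0 ≤ lam) :
    ((Δ : ℝ) + 1) * (1 + (d : ℝ) * lam) ^ ((Δ : ℝ) / (d : ℝ))
    ≥ 1 + (Δ : ℝ) * (1 + ((d : ℝ) + 1) * lam) ^ (((Δ : ℝ) + 1) / ((d : ℝ) + 1)) := by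
  have hd0 : (0:ℝ) < (d:ℝ) := by exact_mod_cast hd1
  have hΔ0 : (0:ℝ) < (Δ:ℝ) := by exact_mod_cast hΔ
  have hdΔ' : (d:ℝ) ≤ (Δ:ℝ) := by exact_mod_cast hdΔ
  have hd1' : (0:ℝ) < (d:ℝ) + 1 := by linarith
  set c₁ : ℝ := (Δ:ℝ) / (d:ℝ) with hc₁def
  set c₂ : ℝ := ((Δ:ℝ) + 1) / ((d:ℝ) + 1) with hc₂def
  have hc₁ : 1 ≤ c₁ := (one_le_div hd0).2 hdΔ'
  have hc₂ : 1 ≤ c₂ := (one_le_div hd1').2 (by linarith)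
  set H : ℝ → ℝ := fun x =>
    ((Δ:ℝ) + 1) * (1 + (d:ℝ) * x) ^ c₁ - 1 - (Δ:ℝ) * (1 + ((d:ℝ) + 1) * x) ^ c₂ with hHdef
  have hderiv : ∀ x : ℝ, HasDerivAt H
      (((Δ:ℝ) + 1) * ((d:ℝ) * c₁ * (1 + (d:ℝ) * x) ^ (c₁ - 1))
        - (Δ:ℝ) * (((d:ℝ) + 1) * c₂ * (1 + ((d:ℝ) + 1) * x) ^ (c₂ - 1))) x := by
    intro x
    have h1 : HasDerivAt (fun y : ℝ => 1 + (d:ℝ) * y) (d:ℝ) x := by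
      simpa using ((hasDerivAt_id x).const_mul (d:ℝ)).const_add 1
    have h2 : HasDerivAt (fun y : ℝ => 1 + ((d:ℝ) + 1) * y) ((d:ℝ) + 1) x := by
      simpa using ((hasDerivAt_id x).const_mul ((d:ℝ) + 1)).const_add 1
    have h1' := (h1.rpow_const (Or.inr hc₁)).const_mul ((Δ:ℝ) + 1)
    have h2' := (h2.rpow_const (Or.inr hc₂)).const_mul (Δ:ℝ)
    have := (h1'.sub_const 1).sub h2'
    exact this
  have hdiff : Differentiable ℝ H := fun x => (hderiv x).differentiableAt
  have hmono : MonotoneOn H (Ici 0) := by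
    apply monotoneOn_of_deriv_nonneg (convex_Ici 0) hdiff.continuous.continuousOn
      hdiff.differentiableOn
    intro x hx
    rw [interior_Ici] at hx
    have hx0 : (0:ℝ) ≤ x := le_of_lt hx
    rw [(hderiv x).deriv]
    -- key inequality
    have hB0 : (0:ℝ) ≤ 1 + ((d:ℝ) + 1) * x := by nlinarith
    have hA0 : (0:ℝ) ≤ 1 + (d:ℝ) * x := by nlinarith
    have hw : (d:ℝ)/((d:ℝ)+1) + 1/((d:ℝ)+1) = 1 := by field_simp
    have hgm := Real.geom_mean_le_arith_mean2_weighted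
      (div_nonneg hd0.le hd1'.le) (div_nonneg zero_le_one hd1'.le) hB0 zero_le_one hw
    rw [Real.one_rpow, mul_one, mul_one] at hgm
    have hgm' : (1 + ((d:ℝ) + 1) * x) ^ ((d:ℝ)/((d:ℝ)+1)) ≤ 1 + (d:ℝ) * x := by
      refine hgm.trans_eq ?_
      field_simp
      ring
    have ht : (0:ℝ) ≤ ((Δ:ℝ) - d) / d := div_nonneg (by linarith) hd0.le
    have key : (1 + ((d:ℝ) + 1) * x) ^ (c₂ - 1) ≤ (1 + (d:ℝ) * x) ^ (c₁ - 1) := by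
      have := Real.rpow_le_rpow (Real.rpow_nonneg hB0 _) hgm' ht
      rw [← Real.rpow_mul hB0] at this
      have e1 : (d:ℝ)/((d:ℝ)+1) * (((Δ:ℝ) - d)/d) = c₂ - 1 := by
        rw [hc₂def]; field_simp; ring
      have e2 : c₁ - 1 = ((Δ:ℝ) - d)/d := by rw [hc₁def]; field_simp
      rw [e1] at this
      rw [e2]
      exact this
    have hc1e : ((Δ:ℝ) + 1) * ((d:ℝ) * c₁) = (Δ:ℝ) * (((d:ℝ) + 1) * c₂) := by
      rw [hc₁def, hc₂def]; field_simp
    have hP0 : (0:ℝ) ≤ (1 + ((d:ℝ) + 1) * x) ^ (c₂ - 1) := Real.rpow_nonneg hB0 _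
    nlinarith [mul_le_mul_of_nonneg_left key
      (show (0:ℝ) ≤ (Δ:ℝ) * (((d:ℝ) + 1) * c₂) from by positivity)]
  have h0 : H 0 = 0 := by
    simp [hHdef]
  have := hmono (self_mem_Ici) (show lam ∈ Ici (0:ℝ) from hlam) hlam
  rw [h0] at this
  simp only [hHdef] at this
  linarith
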